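/- Every chordal graph with at least one vertex has a simplicial vertex, i.e., a vertex whose neighborhood is a clique. -/

import Mathlib

/-- A graph is chordal if every cycle of length at least four has a chord. -/
def IsChordal {V : Type*} (G : SimpleGraph V) : Prop :=
  ∀ (u : V) (c : G.Walk u u), c.IsCycle → 4 ≤ c.length →
    ∃ a b : V, a ∈ c.support ∧ b ∈ c.support ∧ G.Adj a b ∧ s(a, b) ∉ c.edges

universe u
open SimpleGraph

section Aux

variable {V : Type u} {G : SimpleGraph V}


lemma two_le_length {x y : V} (p : G.Walk x y) (hne : x ≠ y) (hadj : ¬ G.Adj x y) :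
    2 ≤ p.length := by
  cases p with
  | nil => exact absurd rfl hne
  | cons h q =>
    cases q with
    | nil => exact absurd h hadj
    | cons h' q' => simp [SimpleGraph.Walk.length_cons]

lemma walk_support_pair {a b : V} (hnadj : ¬ G.Adj a b) (p : G.Walk a b)
    (h : ∀ z ∈ p.support, z = a ∨ z = b) : a = b := by
  cases p with
  | nil => rfl
  | @cons _ w _ hadj q =>
    rcases h w (by simp [Walk.support_cons, Walk.start_mem_support]) with h1 | h1
    · exact absurd (h1 ▸ hadj) (G.irrefl)
    · exact absurd (h1 ▸ hadj) hnadj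

lemma shortcut [DecidableEq V] : ∀ {x y : V} (p : G.Walk x y) {u v : V}, u ∈ p.support →
    v ∈ p.support → G.Adj u v → s(u,v) ∉ p.edges →
    ∃ q : G.Walk x y, q.length < p.length ∧ ∀ z ∈ q.support, z ∈ p.support := by
  intro x y p
  induction p with
  | nil =>
    intro u v hu hv huv _
    simp [Walk.support_nil] at hu hv
    subst hu; subst hv; exact absurd rfl huv.ne
  | @cons x w y h p ih =>
    intro u v hu hv huv he
    simp only [Walk.support_cons, List.mem_cons] at hu hv
    rcases hu with rfl | hu' <;> rcases hv with rfl | hv'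
    · exact absurd rfl huv.ne
    · -- u = x, v in p.support
      have hvw : v ≠ w := by
        rintro rfl; exact he (by simp [Walk.edges_cons])
      have hsum : (p.takeUntil v hv').length + (p.dropUntil v hv').length = p.length := by
        have := congrArg Walk.length (p.take_spec hv'); rwa [Walk.length_append] at this
      have htk : 1 ≤ (p.takeUntil v hv').length := by
        by_contra hcon
        push_neg at hcon
        have h0 : (p.takeUntil v hv').length = 0 := by omega
        exact hvw (Walk.eq_of_length_eq_zero h0).symm
      have hlt : (p.dropUntil v hv').length + 1 < p.length + 1 := by omega
      refine ⟨Walk.cons huv (p.dropUntil v hv'), ?_, ?_⟩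
      · simpa only [Walk.length_cons] using hlt
      · intro z hz
        simp only [Walk.support_cons, List.mem_cons] at hz ⊢
        rcases hz with rfl | hz
        · exact Or.inl rfl
        · exact Or.inr (Walk.support_dropUntil_subset p hv' hz)
    · -- v = x, u in p.support
      have huw : u ≠ w := by
        rintro rfl
        exact he (by rw [Sym2.eq_swap]; simp [Walk.edges_cons])
      have hsum : (p.takeUntil u hu').length + (p.dropUntil u hu').length = p.length := by
        have := congrArg Walk.length (p.take_spec hu'); rwa [Walk.length_append] at this
      have htk : 1 ≤ (p.takeUntil u hu').length := by
        by_contra hcon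
        push_neg at hcon
        have h0 : (p.takeUntil u hu').length = 0 := by omega
        exact huw (Walk.eq_of_length_eq_zero h0).symm
      have hlt : (p.dropUntil u hu').length + 1 < p.length + 1 := by omega
      refine ⟨Walk.cons huv.symm (p.dropUntil u hu'), ?_, ?_⟩
      · simpa only [Walk.length_cons] using hlt
      · intro z hz
        simp only [Walk.support_cons, List.mem_cons] at hz ⊢
        rcases hz with rfl | hz
        · exact Or.inl rfl
        · exact Or.inr (Walk.support_dropUntil_subset p hu' hz)
    · have he' : s(u,v) ∉ p.edges := fun hh => he (by simp [Walk.edges_cons, hh])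
      obtain ⟨q, h1, h2⟩ := ih hu' hv' huv he'
      refine ⟨Walk.cons h q, by simp only [Walk.length_cons]; omega, ?_⟩
      intro z hz
      simp only [Walk.support_cons, List.mem_cons] at hz ⊢
      rcases hz with rfl | hz
      · exact Or.inl rfl
      · exact Or.inr (h2 z hz)


lemma isChordal_induce (s : Set V) (h : IsChordal G) : IsChordal (G.induce s) := by
  intro u c hc hlen
  have hinj : Function.Injective (SimpleGraph.Embedding.induce (G := G) s).toHom := by
    intro a b hab
    exact Subtype.ext hab
  obtain ⟨a, b, ha, hb, hab, he⟩ := h ↑u (c.map (SimpleGraph.Embedding.induce (G := G) s).toHom)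
    (hc.map hinj) (hlen.trans_eq (Walk.length_map _ _).symm)
  replace ha : a ∈ c.support.map (SimpleGraph.Embedding.induce (G := G) s).toHom := by
    rw [← Walk.support_map]; exact ha
  replace hb : b ∈ c.support.map (SimpleGraph.Embedding.induce (G := G) s).toHom := by
    rw [← Walk.support_map]; exact hb
  rw [List.mem_map] at ha hb
  obtain ⟨a', ha', rfl⟩ := ha
  obtain ⟨b', hb', rfl⟩ := hb
  refine ⟨a', b', ha', hb', ?_, ?_⟩
  · simpa using hab
  · intro hcon
    apply he
    have h' : s((SimpleGraph.Embedding.induce (G := G) s).toHom a',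
        (SimpleGraph.Embedding.induce (G := G) s).toHom b') ∈
        (c.map (SimpleGraph.Embedding.induce (G := G) s).toHom).edges := by
      rw [Walk.edges_map, List.mem_map]
      exact ⟨s(a', b'), hcon, by simp⟩
    exact h'

lemma sep_clique (hch : IsChordal G) {S A B : Set V} {x y : V}
    (hxS : x ∈ S) (hyS : y ∈ S) (hxy : x ≠ y)
    (hAS : ∀ z ∈ A, z ∉ S) (hBS : ∀ z ∈ B, z ∉ S)
    (hAB : ∀ z, z ∈ A → z ∈ B → False)
    (hAclosed : ∀ z ∈ A, ∀ w, G.Adj z w → w ∉ S → w ∈ A)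
    (hAconn : ∀ z ∈ A, ∀ w ∈ A, ∃ p : G.Walk z w, ∀ t ∈ p.support, t ∈ A)
    (hBconn : ∀ z ∈ B, ∀ w ∈ B, ∃ p : G.Walk z w, ∀ t ∈ p.support, t ∈ B)
    (hxA : ∃ z ∈ A, G.Adj x z) (hyA : ∃ z ∈ A, G.Adj y z)
    (hxB : ∃ z ∈ B, G.Adj x z) (hyB : ∃ z ∈ B, G.Adj y z) :
    G.Adj x y := by
  classical
  by_contra hnadj
  -- minimal-length x-y walk with interior in a given side
  have build : ∀ (A₀ : Set V), (∀ z ∈ A₀, ∀ w ∈ A₀, ∃ p : G.Walk z w, ∀ t ∈ p.support, t ∈ A₀) →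
      (∃ z ∈ A₀, G.Adj x z) → (∃ z ∈ A₀, G.Adj y z) →
      ∃ PA : G.Walk x y, PA.IsPath ∧ (∀ z ∈ PA.support, z = x ∨ z = y ∨ z ∈ A₀) ∧
        (∀ q : G.Walk x y, (∀ z ∈ q.support, z = x ∨ z = y ∨ z ∈ A₀) → ¬ q.length < PA.length) := by
    intro A₀ hconn hxn hyn
    obtain ⟨xa, hxa, hxxa⟩ := hxn
    obtain ⟨ya, hya, hyya⟩ := hyn
    obtain ⟨w, hw⟩ := hconn xa hxa ya hya
    have hexQ : ∃ p : G.Walk x y, ∀ z ∈ p.support, z = x ∨ z = y ∨ z ∈ A₀ := by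
      refine ⟨Walk.cons hxxa (w.concat hyya.symm), ?_⟩
      intro z hz
      simp only [Walk.support_cons, Walk.support_concat, List.concat_eq_append, List.mem_cons,
        List.mem_append, List.mem_singleton] at hz
      rcases hz with rfl | hz | rfl | h0
      · exact Or.inl rfl
      · exact Or.inr (Or.inr (hw z hz))
      · exact Or.inr (Or.inl rfl)
      · exact absurd h0 List.not_mem_nil
    have hP : ∃ n, ∃ p : G.Walk x y, (∀ z ∈ p.support, z = x ∨ z = y ∨ z ∈ A₀) ∧ p.length = n := by
      obtain ⟨p, hp⟩ := hexQ
      exact ⟨p.length, p, hp, rfl⟩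
    obtain ⟨p1, hQ1, hlen1⟩ := Nat.find_spec hP
    refine ⟨p1.bypass, p1.bypass_isPath, ?_, ?_⟩
    · intro z hz
      exact hQ1 z (p1.support_bypass_subset hz)
    · intro q hq hlt
      have h1 : q.length < Nat.find hP :=
        lt_of_lt_of_le hlt (le_trans p1.length_bypass_le (le_of_eq hlen1))
      exact Nat.find_min hP h1 ⟨q, hq, rfl⟩
  obtain ⟨PA, hPAp, hQA, hminA⟩ := build A hAconn hxA hyA
  obtain ⟨PB, hPBp, hQB, hminB⟩ := build B hBconn hxB hyB
  have hxA' : x ∉ A := fun h => hAS x h hxS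
  have hyA' : y ∉ A := fun h => hAS y h hyS
  have hxB' : x ∉ B := fun h => hBS x h hxS
  have hyB' : y ∉ B := fun h => hBS y h hyS
  have hinter : ∀ z, z ∈ PA.support → z ∈ PB.support → z = x ∨ z = y := by
    intro z h1 h2
    rcases hQA z h1 with rfl | rfl | hA
    · exact Or.inl rfl
    · exact Or.inr rfl
    rcases hQB z h2 with rfl | rfl | hB
    · exact Or.inl rfl
    · exact Or.inr rfl
    exact absurd (hAB z hA hB) id
  set C : G.Walk x x := PA.append PB.reverse with hCdef
  have hClen : C.length = PA.length + PB.length := by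
    rw [hCdef, Walk.length_append, Walk.length_reverse]
  have hlenA : 2 ≤ PA.length := two_le_length PA hxy hnadj
  have hlenB : 2 ≤ PB.length := two_le_length PB hxy hnadj
  have hCtrail : C.IsTrail := by
    constructor
    rw [hCdef, Walk.edges_append, Walk.edges_reverse]
    refine List.Nodup.append hPAp.isTrail.edges_nodup
      (List.nodup_reverse.mpr hPBp.isTrail.edges_nodup) ?_
    intro e he1 he2
    rw [List.mem_reverse] at he2
    induction e with
    | h c d =>
      have hc1 := PA.fst_mem_support_of_mem_edges he1
      have hd1 := PA.snd_mem_support_of_mem_edges he1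
      have hc2 := PB.fst_mem_support_of_mem_edges he2
      have hd2 := PB.snd_mem_support_of_mem_edges he2
      have hcd := PA.adj_of_mem_edges he1
      rcases hinter c hc1 hc2 with rfl | rfl <;> rcases hinter d hd1 hd2 with rfl | rfl
      · exact hcd.ne rfl
      · exact hnadj hcd
      · exact hnadj hcd.symm
      · exact hcd.ne rfl
  have hCne : C ≠ Walk.nil := by
    intro h
    have := congrArg Walk.length h
    rw [hClen] at this
    simp only [Walk.length_nil] at this
    omega
  have hnodup : C.support.tail.Nodup := by
    rw [hCdef, Walk.tail_support_append]
    have hA1 : PA.support.tail.Nodup := hPAp.support_nodup.sublist (List.tail_sublist _)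
    have hB1 : PB.reverse.support.tail.Nodup :=
      hPBp.reverse.support_nodup.sublist (List.tail_sublist _)
    refine List.Nodup.append hA1 hB1 ?_
    intro z hz1 hz2
    have hzx : z ≠ x := by
      intro h
      have := hPAp.support_nodup
      rw [PA.support_eq_cons] at this
      exact (List.nodup_cons.mp this).1 (h ▸ hz1)
    have hzy : z ≠ y := by
      intro h
      have := hPBp.reverse.support_nodup
      rw [PB.reverse.support_eq_cons] at this
      exact (List.nodup_cons.mp this).1 (h ▸ hz2)
    have hz1' : z ∈ PA.support := by
      rw [PA.support_eq_cons]; exact List.mem_cons_of_mem _ hz1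
    have hz2' : z ∈ PB.support := by
      have : z ∈ PB.reverse.support := by
        rw [PB.reverse.support_eq_cons]; exact List.mem_cons_of_mem _ hz2
      rwa [Walk.support_reverse, List.mem_reverse] at this
    rcases hinter z hz1' hz2' with rfl | rfl
    · exact hzx rfl
    · exact hzy rfl
  have hCcyc : C.IsCycle := ⟨⟨hCtrail, hCne⟩, hnodup⟩
  obtain ⟨c, d, hc, hd, hcd, hed⟩ := hch x C hCcyc (by omega)
  have hcs : c ∈ PA.support ∨ c ∈ PB.support := by
    rcases (Walk.mem_support_append_iff _ _).mp hc with h | h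
    · exact Or.inl h
    · right; rwa [Walk.support_reverse, List.mem_reverse] at h
  have hds : d ∈ PA.support ∨ d ∈ PB.support := by
    rcases (Walk.mem_support_append_iff _ _).mp hd with h | h
    · exact Or.inl h
    · right; rwa [Walk.support_reverse, List.mem_reverse] at h
  have heA : s(c, d) ∉ PA.edges := by
    intro h
    exact hed (by rw [hCdef, Walk.edges_append]; exact List.mem_append_left _ h)
  have heB : s(c, d) ∉ PB.edges := by
    intro h
    refine hed ?_
    rw [hCdef, Walk.edges_append, Walk.edges_reverse]
    exact List.mem_append_right _ (List.mem_reverse.mpr h)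
  -- contradiction cases
  have hcaseA : ¬ (c ∈ PA.support ∧ d ∈ PA.support) := by
    rintro ⟨h1, h2⟩
    obtain ⟨q, hqlt, hqsub⟩ := shortcut PA h1 h2 hcd heA
    exact hminA q (fun z hz => hQA z (hqsub z hz)) hqlt
  have hcaseB : ¬ (c ∈ PB.support ∧ d ∈ PB.support) := by
    rintro ⟨h1, h2⟩
    obtain ⟨q, hqlt, hqsub⟩ := shortcut PB h1 h2 hcd heB
    exact hminB q (fun z hz => hQB z (hqsub z hz)) hqlt
  -- remaining mixed case
  have hmix : ∀ c' d', c' ∈ PA.support → c' ∉ PB.support → d' ∈ PB.support → d' ∉ PA.support →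
      G.Adj c' d' → False := by
    intro c' d' h1 h2 h3 h4 hcd'
    have hc'A : c' ∈ A := by
      rcases hQA c' h1 with rfl | rfl | h
      · exact absurd PB.start_mem_support h2
      · exact absurd PB.end_mem_support h2
      · exact h
    have hd'B : d' ∈ B := by
      rcases hQB d' h3 with rfl | rfl | h
      · exact absurd PA.start_mem_support h4
      · exact absurd PA.end_mem_support h4
      · exact h
    exact hAB d' (hAclosed c' hc'A d' hcd' (hBS d' hd'B)) hd'B
  rcases hcs with h1 | h1 <;> rcases hds with h2 | h2
  · exact hcaseA ⟨h1, h2⟩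
  · by_cases h3 : d ∈ PA.support
    · exact hcaseA ⟨h1, h3⟩
    · by_cases h4 : c ∈ PB.support
      · exact hcaseB ⟨h4, h2⟩
      · exact hmix c d h1 h4 h2 h3 hcd
  · by_cases h3 : c ∈ PA.support
    · exact hcaseA ⟨h3, h2⟩
    · by_cases h4 : d ∈ PB.support
      · exact hcaseB ⟨h1, h4⟩
      · exact hmix d c h2 h4 h1 h3 hcd.symm
  · exact hcaseB ⟨h1, h2⟩

end Aux

theorem chordal_aux : ∀ (n : ℕ) {V : Type u} [Finite V] (G : SimpleGraph V),
    Nat.card V ≤ n → IsChordal G →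
    (∀ x y : V, x ≠ y → G.Adj x y) ∨
      ∃ u w : V, u ≠ w ∧ ¬ G.Adj u w ∧
        G.IsClique (G.neighborSet u) ∧ G.IsClique (G.neighborSet w) := by
  intro n
  induction n with
  | zero =>
    intro V _ G hcard _
    left
    intro u v _
    haveI : Nonempty V := ⟨u⟩
    have := Nat.card_pos (α := V)
    omega
  | succ n ih =>
    intro V _ G hcard hch
    classical
    by_cases hcomp : ∀ x y : V, x ≠ y → G.Adj x y
    · exact Or.inl hcomp
    right
    push_neg at hcomp
    obtain ⟨a, b, hab, hnadj⟩ := hcomp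
    -- separators
    set Sepp : Set V → Prop :=
      fun S => a ∉ S ∧ b ∉ S ∧ ∀ p : G.Walk a b, ∃ z ∈ p.support, z ∈ S with hSepdef
    have hSep0 : Sepp {a, b}ᶜ := by
      refine ⟨by simp, by simp, ?_⟩
      intro p
      by_contra hcon
      push_neg at hcon
      refine hab (walk_support_pair hnadj p ?_)
      intro z hz
      have h2 := hcon z hz
      rw [Set.mem_compl_iff] at h2
      push_neg at h2
      by_cases hza : z = a
      · exact Or.inl hza
      · exact Or.inr (by simpa [hza] using h2)
    have hSepEx : ∃ m, ∃ S, Sepp S ∧ S.ncard = m := ⟨_, _, hSep0, rfl⟩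
    obtain ⟨S, hSepS, hScard⟩ := Nat.find_spec hSepEx
    have hmin : ∀ S', Sepp S' → Nat.find hSepEx ≤ S'.ncard := by
      intro S' h
      exact Nat.find_min' hSepEx ⟨S', h, rfl⟩
    obtain ⟨haS, hbS, hsep⟩ := hSepS
    -- the two sides
    set A : Set V := {z | ∃ p : G.Walk a z, ∀ w ∈ p.support, w ∉ S} with hAdef
    set B : Set V := {z | ∃ p : G.Walk b z, ∀ w ∈ p.support, w ∉ S} with hBdef
    have haA : a ∈ A := ⟨Walk.nil, by simpa using haS⟩
    have hbB : b ∈ B := ⟨Walk.nil, by simpa using hbS⟩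
    have hAS : ∀ z ∈ A, z ∉ S := by
      rintro z ⟨p, hp⟩
      exact hp z p.end_mem_support
    have hBS : ∀ z ∈ B, z ∉ S := by
      rintro z ⟨p, hp⟩
      exact hp z p.end_mem_support
    have hAB : ∀ z, z ∈ A → z ∈ B → False := by
      rintro z ⟨p, hp⟩ ⟨q, hq⟩
      obtain ⟨t, ht, htS⟩ := hsep (p.append q.reverse)
      rcases (Walk.mem_support_append_iff _ _).mp ht with h | h
      · exact hp t h htS
      · rw [Walk.support_reverse, List.mem_reverse] at h
        exact hq t h htS
    have hAclosed : ∀ z ∈ A, ∀ w, G.Adj z w → w ∉ S → w ∈ A := by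
      rintro z ⟨p, hp⟩ w hzw hwS
      refine ⟨p.concat hzw, ?_⟩
      intro t ht
      rw [Walk.support_concat, List.mem_append, List.mem_singleton] at ht
      rcases ht with h | rfl
      · exact hp t h
      · exact hwS
    have hBclosed : ∀ z ∈ B, ∀ w, G.Adj z w → w ∉ S → w ∈ B := by
      rintro z ⟨p, hp⟩ w hzw hwS
      refine ⟨p.concat hzw, ?_⟩
      intro t ht
      rw [Walk.support_concat, List.mem_append, List.mem_singleton] at ht
      rcases ht with h | rfl
      · exact hp t h
      · exact hwS
    have hAmem : ∀ z (p : G.Walk a z), (∀ w ∈ p.support, w ∉ S) → ∀ t ∈ p.support, t ∈ A := by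
      intro z p hp t ht
      exact ⟨p.takeUntil t ht, fun w hw => hp w (p.support_takeUntil_subset ht hw)⟩
    have hBmem : ∀ z (p : G.Walk b z), (∀ w ∈ p.support, w ∉ S) → ∀ t ∈ p.support, t ∈ B := by
      intro z p hp t ht
      exact ⟨p.takeUntil t ht, fun w hw => hp w (p.support_takeUntil_subset ht hw)⟩
    have hAconn : ∀ z ∈ A, ∀ w ∈ A, ∃ q : G.Walk z w, ∀ t ∈ q.support, t ∈ A := by
      rintro z ⟨p, hp⟩ w ⟨q, hq⟩
      refine ⟨p.reverse.append q, ?_⟩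
      intro t ht
      rcases (Walk.mem_support_append_iff _ _).mp ht with h | h
      · rw [Walk.support_reverse, List.mem_reverse] at h
        exact hAmem z p hp t h
      · exact hAmem w q hq t h
    have hBconn : ∀ z ∈ B, ∀ w ∈ B, ∃ q : G.Walk z w, ∀ t ∈ q.support, t ∈ B := by
      rintro z ⟨p, hp⟩ w ⟨q, hq⟩
      refine ⟨p.reverse.append q, ?_⟩
      intro t ht
      rcases (Walk.mem_support_append_iff _ _).mp ht with h | h
      · rw [Walk.support_reverse, List.mem_reverse] at h
        exact hBmem z p hp t h
      · exact hBmem w q hq t h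
    -- each separator vertex has neighbors on both sides
    have hnbr : ∀ x ∈ S, (∃ z ∈ A, G.Adj x z) ∧ (∃ z ∈ B, G.Adj x z) := by
      intro x hxS
      have hless : (S \ {x}).ncard < Nat.find hSepEx := by
        rw [← hScard]
        exact Set.ncard_diff_singleton_lt_of_mem hxS S.toFinite
      have hnotSep : ¬ Sepp (S \ {x}) := fun h => absurd (hmin _ h) (by omega)
      have hex : ∃ p : G.Walk a b, ∀ z ∈ p.support, z ∉ S \ {x} := by
        by_contra hcon
        push_neg at hcon
        refine hnotSep ⟨fun h => haS h.1, fun h => hbS h.1, ?_⟩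
        intro p
        obtain ⟨z, hz, hzS⟩ := hcon p
        exact ⟨z, hz, hzS⟩
      obtain ⟨p, hp⟩ := hex
      have hxp : x ∈ p.support := by
        by_contra hxp
        obtain ⟨z, hz, hzS⟩ := hsep p
        refine hp z hz ⟨hzS, ?_⟩
        intro h
        rw [Set.mem_singleton_iff] at h
        exact hxp (h ▸ hz)
      have side : ∀ (c : V) (A' : Set V),
          (∀ z (qq : G.Walk c z), (∀ w ∈ qq.support, w ∉ S) → z ∈ A') →
          ∀ (r : G.Walk x c), (∀ z ∈ r.support, z ∉ S \ {x}) → r.support.count x = 1 →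
          x ≠ c → ∃ z ∈ A', G.Adj x z := by
        intro c A' hmemA r hr hcount hxc
        cases r with
        | nil => exact absurd rfl hxc
        | @cons _ y0 _ hadj r' =>
          have hxr' : x ∉ r'.support := by
            rw [Walk.support_cons, List.count_cons_self] at hcount
            exact List.count_eq_zero.mp (by omega)
          refine ⟨y0, hmemA y0 r'.reverse ?_, hadj⟩
          intro w hw
          rw [Walk.support_reverse, List.mem_reverse] at hw
          have hwx : w ≠ x := fun h => hxr' (h ▸ hw)
          have := hr w (by rw [Walk.support_cons]; exact List.mem_cons_of_mem _ hw)
          intro hwS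
          exact this ⟨hwS, by simpa using hwx⟩
      constructor
      · refine side a A (fun z qq hqq => ⟨qq, hqq⟩) (p.takeUntil x hxp).reverse ?_ ?_ ?_
        · intro z hz
          rw [Walk.support_reverse, List.mem_reverse] at hz
          exact hp z (p.support_takeUntil_subset hxp hz)
        · rw [Walk.support_reverse, List.count_reverse]
          exact p.count_support_takeUntil_eq_one hxp
        · intro h
          exact haS (h ▸ hxS)
      · have hxp' : x ∈ p.reverse.support := by
          rwa [Walk.support_reverse, List.mem_reverse]
        refine side b B (fun z qq hqq => ⟨qq, hqq⟩) (p.reverse.takeUntil x hxp').reverse ?_ ?_ ?_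
        · intro z hz
          rw [Walk.support_reverse, List.mem_reverse] at hz
          have := p.reverse.support_takeUntil_subset hxp' hz
          rw [Walk.support_reverse, List.mem_reverse] at this
          exact hp z this
        · rw [Walk.support_reverse, List.count_reverse]
          exact p.reverse.count_support_takeUntil_eq_one hxp'
        · intro h
          exact hbS (h ▸ hxS)
    -- S is a clique
    have hSclique : ∀ x ∈ S, ∀ y ∈ S, x ≠ y → G.Adj x y := by
      intro x hx y hy hxy
      exact sep_clique hch hx hy hxy hAS hBS hAB hAclosed hAconn hBconn
        (hnbr x hx).1 (hnbr y hy).1 (hnbr x hx).2 (hnbr y hy).2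
    -- a simplicial vertex inside a side
    have hside : ∀ (c : V) (A₀ : Set V), c ∈ A₀ → (∀ z ∈ A₀, z ∉ S) →
        (∀ z ∈ A₀, ∀ w, G.Adj z w → w ∈ A₀ ∪ S) → (∃ t, t ∉ A₀ ∪ S) →
        ∃ v ∈ A₀, G.IsClique (G.neighborSet v) := by
      rintro c A₀ hc hA₀S hcl ⟨t, ht⟩
      set A' : Set V := A₀ ∪ S with hA'def
      have hcard' : Nat.card ↥A' ≤ n := by
        have h1 : A' ⊂ Set.univ := by
          rw [Set.ssubset_univ_iff]
          intro h
          exact ht (h ▸ Set.mem_univ t)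
        have h2 : A'.ncard < (Set.univ : Set V).ncard :=
          Set.ncard_lt_ncard h1 Set.finite_univ
        rw [Set.ncard_univ] at h2
        rw [Nat.card_coe_set_eq]
        omega
      have hch' : IsChordal (G.induce A') := isChordal_induce A' hch
      obtain ⟨v', hv'A, hv'cl⟩ : ∃ v' : ↥A', ↑v' ∈ A₀ ∧
          (G.induce A').IsClique ((G.induce A').neighborSet v') := by
        rcases ih (G.induce A') hcard' hch' with hcomp' | ⟨u, w, huw, hnuw, hclu, hclw⟩
        · refine ⟨⟨c, Or.inl hc⟩, hc, ?_⟩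
          intro p hp q hq hpq
          exact hcomp' p q hpq
        · have hor : ↑u ∈ A₀ ∨ ↑w ∈ A₀ := by
            by_contra hcon
            push_neg at hcon
            have huS : ↑u ∈ S := u.2.resolve_left hcon.1
            have hwS : ↑w ∈ S := w.2.resolve_left hcon.2
            refine hnuw ?_
            have : G.Adj ↑u ↑w := hSclique _ huS _ hwS (fun h => huw (Subtype.ext h))
            simpa using this
          rcases hor with h | h
          · exact ⟨u, h, hclu⟩
          · exact ⟨w, h, hclw⟩
      refine ⟨↑v', hv'A, ?_⟩
      rw [isClique_iff]
      intro p hp q hq hpq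
      rw [mem_neighborSet] at hp hq
      have hpA' : p ∈ A' := hcl _ hv'A p hp
      have hqA' : q ∈ A' := hcl _ hv'A q hq
      have h1 : (⟨p, hpA'⟩ : ↥A') ∈ (G.induce A').neighborSet v' := by
        rw [mem_neighborSet]
        simpa using hp
      have h2 : (⟨q, hqA'⟩ : ↥A') ∈ (G.induce A').neighborSet v' := by
        rw [mem_neighborSet]
        simpa using hq
      have := hv'cl h1 h2 (fun h => hpq (congrArg Subtype.val h))
      simpa using this
    have hAcl' : ∀ z ∈ A, ∀ w, G.Adj z w → w ∈ A ∪ S := by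
      intro z hz w hzw
      by_cases hwS : w ∈ S
      · exact Or.inr hwS
      · exact Or.inl (hAclosed z hz w hzw hwS)
    have hBcl' : ∀ z ∈ B, ∀ w, G.Adj z w → w ∈ B ∪ S := by
      intro z hz w hzw
      by_cases hwS : w ∈ S
      · exact Or.inr hwS
      · exact Or.inl (hBclosed z hz w hzw hwS)
    have hbnot : b ∉ A ∪ S := by
      rintro (⟨p, hp⟩ | h)
      · obtain ⟨z, hz, hzS⟩ := hsep p
        exact hp z hz hzS
      · exact hbS h
    have hanot : a ∉ B ∪ S := by
      rintro (⟨p, hp⟩ | h)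
      · obtain ⟨z, hz, hzS⟩ := hsep p.reverse
        rw [Walk.support_reverse, List.mem_reverse] at hz
        exact hp z hz hzS
      · exact haS h
    obtain ⟨vA, hvA, hvAcl⟩ := hside a A haA hAS hAcl' ⟨b, hbnot⟩
    obtain ⟨vB, hvB, hvBcl⟩ := hside b B hbB hBS hBcl' ⟨a, hanot⟩
    refine ⟨vA, vB, ?_, ?_, hvAcl, hvBcl⟩
    · intro h
      exact hAB vA hvA (h ▸ hvB)
    · intro h
      rcases hAcl' vA hvA vB h with h1 | h1
      · exact hAB vB h1 hvB
      · exact hBS vB hvB h1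

/-- Every chordal graph with at least one vertex has a simplicial vertex,
i.e. a vertex whose neighborhood is a clique. -/
theorem chordal_exists_simplicial {V : Type*} [Fintype V] [Nonempty V]
    (G : SimpleGraph V) (hchordal : IsChordal G) :
    ∃ v : V, G.IsClique (G.neighborSet v) := by
  obtain ⟨v⟩ := ‹Nonempty V›
  rcases chordal_aux (Nat.card V) G le_rfl hchordal with h | ⟨u, w, _, _, hu, _⟩
  · refine ⟨v, ?_⟩
    rw [SimpleGraph.isClique_iff]
    intro p hp q hq hpq
    exact h p q hpq
  · exact ⟨u, hu⟩
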